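/- Let A be an abelian category and let f : A ⟶ B, g : A ⟶ C, h : B ⟶ D, k : C ⟶ D form a commutative quadrangle (f ≫ h = g ≫ k). Then the quadrangle is a weak square if and only if the induced morphism on kernels kernel g ⟶ kernel h is an epimorphism and the induced morphism on cokernels cokernel g ⟶ cokernel h is a monomorphism. -/
import Mathlib


open CategoryTheory CategoryTheory.Limits

/-- A commutative quadrangle `(f, g, h, k)` (with `f ≫ h = g ≫ k`) in an abelian category is a
*weak square* if its diagonal sequence `A ⟶ B ⊞ C ⟶ D`, with first morphism `biprod.lift f g`
and second morphism `biprod.desc h (-k)`, is exact at `B ⊞ C`. -/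
def IsWeakSquare {A : Type*} [Category A] [Abelian A] {W X Y Z : A}
    (f : W ⟶ X) (g : W ⟶ Y) (h : X ⟶ Z) (k : Y ⟶ Z) : Prop :=
  ∃ w : biprod.lift f g ≫ biprod.desc h (-k) = 0,
    (ShortComplex.mk (biprod.lift f g) (biprod.desc h (-k)) w).Exact

/-- A commutative quadrangle is a weak square if and only if the induced morphism on kernels
`kernel g ⟶ kernel h` is an epimorphism and the induced morphism on cokernels
`cokernel g ⟶ cokernel h` is a monomorphism. -/
theorem weakSquare_iff_epi_kernelMap_and_mono_cokernelMap
    {A : Type*} [Category A] [Abelian A] {W X Y Z : A}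
    (f : W ⟶ X) (g : W ⟶ Y) (h : X ⟶ Z) (k : Y ⟶ Z) (comm : f ≫ h = g ≫ k) :
    IsWeakSquare f g h k ↔
      (Epi (kernel.lift h (kernel.ι g ≫ f)
          (by rw [Category.assoc, comm, ← Category.assoc, kernel.condition, zero_comp])) ∧
       Mono (cokernel.desc g (k ≫ cokernel.π h)
          (by rw [← Category.assoc, ← comm, Category.assoc, cokernel.condition, comp_zero]))) := by
  set κ : kernel g ⟶ kernel h := kernel.lift h (kernel.ι g ≫ f)
      (by rw [Category.assoc, comm, ← Category.assoc, kernel.condition, zero_comp]) with hκ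
  set χ : cokernel g ⟶ cokernel h := cokernel.desc g (k ≫ cokernel.π h)
      (by rw [← Category.assoc, ← comm, Category.assoc, cokernel.condition, comp_zero]) with hχ
  have hκι : κ ≫ kernel.ι h = kernel.ι g ≫ f := by simp [hκ]
  have hχπ : cokernel.π g ≫ χ = k ≫ cokernel.π h := by simp [hχ]
  have exh : (ShortComplex.mk h (cokernel.π h) (cokernel.condition h)).Exact :=
    ShortComplex.exact_of_g_is_cokernel _ (cokernelIsCokernel h)
  have exg : (ShortComplex.mk g (cokernel.π g) (cokernel.condition g)).Exact :=
    ShortComplex.exact_of_g_is_cokernel _ (cokernelIsCokernel g)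
  constructor
  · rintro ⟨w, hex⟩
    rw [ShortComplex.exact_iff_exact_up_to_refinements] at hex
    constructor
    · rw [epi_iff_surjective_up_to_refinements]
      intro T y
      have hz : (biprod.lift (y ≫ kernel.ι h) 0 : T ⟶ X ⊞ Y) ≫ biprod.desc h (-k) = 0 := by
        rw [biprod.lift_desc]
        simp
      obtain ⟨T', π, hπ, x₁, fac⟩ := hex _ hz
      have hfst := fac =≫ biprod.fst
      have hsnd := fac =≫ biprod.snd
      simp only [ShortComplex.mk] at hfst hsnd
      simp only [Category.assoc, biprod.lift_fst, biprod.lift_snd, comp_zero] at hfst hsnd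
      refine ⟨T', π, hπ, kernel.lift g x₁ hsnd.symm, ?_⟩
      rw [← cancel_mono (kernel.ι h)]
      have hl : (kernel.lift g x₁ hsnd.symm ≫ κ) ≫ kernel.ι h = x₁ ≫ f := by
        rw [Category.assoc, hκι, ← Category.assoc, kernel.lift_ι]
      rw [hl, Category.assoc]
      exact hfst
    · rw [Preadditive.mono_iff_cancel_zero]
      intro T t ht
      obtain ⟨T₁, π₁, hπ₁, y, hy⟩ := surjective_up_to_refinements_of_epi (cokernel.π g) t
      have hyk : (y ≫ k) ≫ cokernel.π h = 0 := by
        have h1 := hy =≫ χ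
        rw [Category.assoc, ht, comp_zero, Category.assoc, hχπ] at h1
        rw [Category.assoc]
        exact h1.symm
      obtain ⟨T₂, π₂, hπ₂, x, hx⟩ := exh.exact_up_to_refinements (y ≫ k) hyk
      simp only [ShortComplex.mk] at hx
      have hz : (biprod.lift x (π₂ ≫ y) : T₂ ⟶ X ⊞ Y) ≫ biprod.desc h (-k) = 0 := by
        rw [biprod.lift_desc, Preadditive.comp_neg, ← hx]
        simp
      obtain ⟨T₃, π₃, hπ₃, x₁, fac⟩ := hex _ hz
      have hsnd := fac =≫ biprod.snd
      simp only [ShortComplex.mk] at hsnd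
      simp only [Category.assoc, biprod.lift_snd] at hsnd
      have h0 : π₃ ≫ π₂ ≫ y ≫ cokernel.π g = 0 := by
        have h1 := hsnd =≫ cokernel.π g
        simp only [Category.assoc] at h1
        rw [h1, cokernel.condition, comp_zero]
      have h2 : (π₃ ≫ π₂ ≫ π₁) ≫ t = 0 := by
        simp only [Category.assoc, hy]
        exact h0
      exact zero_of_epi_comp _ h2
  · rintro ⟨hepi, hmono⟩
    have w : biprod.lift f g ≫ biprod.desc h (-k) = 0 := by
      rw [biprod.lift_desc, Preadditive.comp_neg, comm, add_neg_cancel]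
    refine ⟨w, ?_⟩
    rw [ShortComplex.exact_iff_exact_up_to_refinements]
    intro T x₂ hx₂
    simp only [ShortComplex.mk] at hx₂ ⊢
    have hdesc : biprod.desc h (-k) = biprod.fst ≫ h - biprod.snd ≫ k := by
      apply biprod.hom_ext' <;> simp
    have hbc : x₂ ≫ biprod.fst ≫ h = x₂ ≫ biprod.snd ≫ k := by
      have h2 : x₂ ≫ (biprod.fst ≫ h - biprod.snd ≫ k) = 0 := by
        rw [← hdesc]; exact hx₂
      rw [Preadditive.comp_sub, sub_eq_zero] at h2
      simpa only [Category.assoc] using h2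
    have hcg : (x₂ ≫ biprod.snd) ≫ cokernel.π g = 0 := by
      rw [← cancel_mono χ, zero_comp, Category.assoc, Category.assoc, hχπ]
      have h1 : x₂ ≫ biprod.snd ≫ k ≫ cokernel.π h = (x₂ ≫ biprod.snd ≫ k) ≫ cokernel.π h := by
        simp only [Category.assoc]
      rw [h1, ← hbc]
      simp
    obtain ⟨T₁, π₁, hπ₁, a, ha⟩ := exg.exact_up_to_refinements (x₂ ≫ biprod.snd) hcg
    simp only [ShortComplex.mk] at ha
    have hb' : (π₁ ≫ x₂ ≫ biprod.fst - a ≫ f) ≫ h = 0 := by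
      rw [Preadditive.sub_comp]
      simp only [Category.assoc, hbc, comm]
      have h1 := ha =≫ k
      simp only [Category.assoc] at h1
      rw [h1, sub_self]
    obtain ⟨T₂, π₂, hπ₂, v, hv⟩ :=
      (epi_iff_surjective_up_to_refinements κ).mp hepi (kernel.lift h _ hb')
    have hvι := hv =≫ kernel.ι h
    simp only [Category.assoc, hκι, kernel.lift_ι] at hvι
    -- hvι : π₂ ≫ (π₁ ≫ x₂ ≫ biprod.fst - a ≫ f) = v ≫ kernel.ι g ≫ f
    have hfst' : π₂ ≫ π₁ ≫ x₂ ≫ biprod.fst = π₂ ≫ a ≫ f + v ≫ kernel.ι g ≫ f := by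
      rw [Preadditive.comp_sub] at hvι
      try simp only [Category.assoc] at hvι
      rw [sub_eq_iff_eq_add] at hvι
      rw [hvι, add_comm]
    have hsnd' : π₂ ≫ π₁ ≫ x₂ ≫ biprod.snd = π₂ ≫ a ≫ g + v ≫ kernel.ι g ≫ g := by
      rw [kernel.condition, comp_zero, add_zero]
      have h1 := π₂ ≫= ha
      simp only [Category.assoc] at h1 ⊢
      exact h1
    refine ⟨T₂, π₂ ≫ π₁, epi_comp _ _, π₂ ≫ a + v ≫ kernel.ι g, ?_⟩
    apply biprod.hom_ext
    · simp only [Category.assoc, biprod.lift_fst, Preadditive.add_comp]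
      exact hfst'
    · simp only [Category.assoc, biprod.lift_snd, Preadditive.add_comp]
      exact hsnd'
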